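/- Let a ∈ ℍ with Re a > 0 and let p ∈ ℍ not lying on the 2-sphere [−a] (i.e. it is not the case that Re p = −Re a and |Im p| = |Im a|). Then p² + 2 Re(a) p + |a|² ≠ 0, p + a ≠ 0, and, setting p̃ = (p + a)⁻¹ p (p + a), one has p̃ + ā ≠ 0 and (p² + 2 Re(a) p + |a|²)⁻¹ (p² − a²) = (p̃ + ā)⁻¹ (p̃ − a) = 1 − 2 Re(a) (p̃ + ā)⁻¹. -/

import Mathlib

local notation "ℍ" => Quaternion ℝ

set_option maxHeartbeats 2000000 in
/-- Pointwise formulas for the Blaschke factor `b_a` of the half-space `ℍ₊` at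
`a` (with `Re a > 0`): for `p ∉ [−a]`, the quaternions `p² + 2 Re(a) p + |a|²`, `p + a`
and `p̃ + ā` are nonzero, where `p̃ = (p + a)⁻¹ p (p + a)`, and
`(p² + 2 Re(a) p + |a|²)⁻¹ (p² − a²) = (p̃ + ā)⁻¹ (p̃ − a) = 1 − 2 Re(a)(p̃ + ā)⁻¹`. -/
theorem blaschke_factor_formulas (a p : ℍ)
    (ha : 0 < a.re) (hp : ¬(p.re = -a.re ∧ ‖p.im‖ = ‖a.im‖)) :
    p ^ 2 + 2 * (a.re : ℍ) * p + ((Quaternion.normSq a : ℝ) : ℍ) ≠ 0 ∧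
    p + a ≠ 0 ∧
    (p + a)⁻¹ * p * (p + a) + star a ≠ 0 ∧
    (p ^ 2 + 2 * (a.re : ℍ) * p + ((Quaternion.normSq a : ℝ) : ℍ))⁻¹ * (p ^ 2 - a ^ 2)
      = ((p + a)⁻¹ * p * (p + a) + star a)⁻¹ * ((p + a)⁻¹ * p * (p + a) - a) ∧
    (p ^ 2 + 2 * (a.re : ℍ) * p + ((Quaternion.normSq a : ℝ) : ℍ))⁻¹ * (p ^ 2 - a ^ 2)
      = 1 - 2 * (a.re : ℍ) * ((p + a)⁻¹ * p * (p + a) + star a)⁻¹ := by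
  have e1 : (2:ℍ).re = 2 := rfl
  have e2 : (2:ℍ).imI = 0 := rfl
  have e3 : (2:ℍ).imJ = 0 := rfl
  have e4 : (2:ℍ).imK = 0 := rfl
  set Q : ℍ := p ^ 2 + 2 * (a.re : ℍ) * p + ((Quaternion.normSq a : ℝ) : ℍ) with hQdef
  have hnorm : ‖p.im‖ = ‖a.im‖ ↔
      p.imI ^ 2 + p.imJ ^ 2 + p.imK ^ 2 = a.imI ^ 2 + a.imJ ^ 2 + a.imK ^ 2 := by
    have h1 : Quaternion.normSq p.im = p.imI ^ 2 + p.imJ ^ 2 + p.imK ^ 2 := by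
      rw [Quaternion.normSq_def']; simp
    have h2 : Quaternion.normSq a.im = a.imI ^ 2 + a.imJ ^ 2 + a.imK ^ 2 := by
      rw [Quaternion.normSq_def']; simp
    rw [← h1, ← h2, Quaternion.normSq_eq_norm_mul_self, Quaternion.normSq_eq_norm_mul_self]
    constructor
    · intro h; rw [h]
    · intro h
      nlinarith [norm_nonneg p.im, norm_nonneg a.im]
  have hre : Quaternion.normSq a = a.re ^ 2 + (a.imI ^ 2 + a.imJ ^ 2 + a.imK ^ 2) := by
    rw [Quaternion.normSq_def']; ring
  -- Q ≠ 0
  have hQ : Q ≠ 0 := by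
    intro h
    rw [hQdef, Quaternion.ext_iff] at h
    obtain ⟨h1, h2, h3, h4⟩ := h
    simp only [pow_two, Quaternion.re_add, Quaternion.imI_add, Quaternion.imJ_add,
      Quaternion.imK_add, Quaternion.re_mul, Quaternion.imI_mul, Quaternion.imJ_mul,
      Quaternion.imK_mul, Quaternion.re_coe, Quaternion.imI_coe, Quaternion.imJ_coe,
      Quaternion.imK_coe, Quaternion.re_zero, Quaternion.imI_zero, Quaternion.imJ_zero,
      Quaternion.imK_zero, e1, e2, e3, e4, hre] at h1 h2 h3 h4
    by_cases hcase : p.re = -a.re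
    · have him : ¬ (p.imI ^ 2 + p.imJ ^ 2 + p.imK ^ 2 = a.imI ^ 2 + a.imJ ^ 2 + a.imK ^ 2) :=
        fun hh => hp ⟨hcase, hnorm.mpr hh⟩
      rw [hcase] at h1
      exact him (by nlinarith [h1])
    · have hfac : p.re + a.re ≠ 0 := fun hh => hcase (by linarith)
      have hI : p.imI = 0 := by
        have hz : (p.re + a.re) * p.imI = 0 := by linear_combination h2 / 2
        rcases mul_eq_zero.mp hz with h | h
        · exact absurd h hfac
        · exact h
      have hJ : p.imJ = 0 := by
        have hz : (p.re + a.re) * p.imJ = 0 := by linear_combination h3 / 2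
        rcases mul_eq_zero.mp hz with h | h
        · exact absurd h hfac
        · exact h
      have hK : p.imK = 0 := by
        have hz : (p.re + a.re) * p.imK = 0 := by linear_combination h4 / 2
        rcases mul_eq_zero.mp hz with h | h
        · exact absurd h hfac
        · exact h
      have hsq : (p.re + a.re) ^ 2 = 0 := by
        rw [hI, hJ, hK] at h1
        nlinarith [h1, sq_nonneg a.imI, sq_nonneg a.imJ, sq_nonneg a.imK]
      exact hfac (pow_eq_zero_iff (two_ne_zero) |>.mp hsq)
  -- p + a ≠ 0
  have hpa : p + a ≠ 0 := by
    intro h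
    rw [Quaternion.ext_iff] at h
    obtain ⟨h1, h2, h3, h4⟩ := h
    simp only [Quaternion.re_add, Quaternion.imI_add, Quaternion.imJ_add, Quaternion.imK_add,
      Quaternion.re_zero, Quaternion.imI_zero, Quaternion.imJ_zero, Quaternion.imK_zero] at h1 h2 h3 h4
    exact hp ⟨by linarith, hnorm.mpr (by linear_combination (p.imI - a.imI)*h2 + (p.imJ - a.imJ)*h3 + (p.imK - a.imK)*h4)⟩
  -- star a = 2 a.re - a  and  normSq a = a * star a
  have hs : star a = 2 * (a.re : ℍ) - a := by
    rw [eq_sub_iff_add_eq, Quaternion.star_add_self]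
  have hns : ((Quaternion.normSq a : ℝ) : ℍ) = a * star a := (Quaternion.self_mul_star a).symm
  -- factorization Q = p (p+a) + (p+a) (star a)
  have hfact : Q = p * (p + a) + (p + a) * star a := by
    rw [hQdef]
    ext <;>
      simp only [pow_two, Quaternion.re_add, Quaternion.imI_add, Quaternion.imJ_add,
        Quaternion.imK_add, Quaternion.re_mul, Quaternion.imI_mul, Quaternion.imJ_mul,
        Quaternion.imK_mul, Quaternion.re_coe, Quaternion.imI_coe, Quaternion.imJ_coe,
        Quaternion.imK_coe, Quaternion.re_star, Quaternion.imI_star, Quaternion.imJ_star,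
        Quaternion.imK_star, e1, e2, e3, e4, hre] <;> ring
  have key1 : (p + a)⁻¹ * p * (p + a) + star a = (p + a)⁻¹ * Q := by
    rw [hfact, mul_add ((p+a)⁻¹) (p*(p+a)) ((p+a)*star a), ← mul_assoc ((p+a)⁻¹) p (p+a),
      ← mul_assoc ((p+a)⁻¹) (p+a) (star a), inv_mul_cancel₀ hpa, one_mul]
  have hps : (p + a)⁻¹ * p * (p + a) + star a ≠ 0 := by
    rw [key1]; exact mul_ne_zero (inv_ne_zero hpa) hQ
  have key2 : (p + a)⁻¹ * p * (p + a) - a = (p + a)⁻¹ * (p ^ 2 - a ^ 2) := by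
    have expand : p ^ 2 - a ^ 2 = p * (p + a) - (p + a) * a := by noncomm_ring
    rw [expand, mul_sub ((p+a)⁻¹) (p*(p+a)) ((p+a)*a), ← mul_assoc ((p+a)⁻¹) p (p+a),
      ← mul_assoc ((p+a)⁻¹) (p+a) a, inv_mul_cancel₀ hpa, one_mul]
  have eq1 : Q⁻¹ * (p ^ 2 - a ^ 2)
      = ((p + a)⁻¹ * p * (p + a) + star a)⁻¹ * ((p + a)⁻¹ * p * (p + a) - a) := by
    rw [key1, key2, mul_inv_rev, inv_inv, mul_assoc, ← mul_assoc (p + a),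
      mul_inv_cancel₀ hpa, one_mul]
  have hc : ∀ x : ℍ, x * (2 * (a.re : ℍ)) = 2 * (a.re : ℍ) * x := by
    intro x
    rw [show (2:ℍ) * ((a.re : ℝ) : ℍ) = ((2 * a.re : ℝ) : ℍ) from by push_cast; rfl,
      Quaternion.coe_commutes]
  have hsub : (p + a)⁻¹ * p * (p + a) - a
      = ((p + a)⁻¹ * p * (p + a) + star a) - 2 * (a.re : ℍ) := by
    rw [hs]; abel
  have eq2 : Q⁻¹ * (p ^ 2 - a ^ 2)
      = 1 - 2 * (a.re : ℍ) * ((p + a)⁻¹ * p * (p + a) + star a)⁻¹ := by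
    rw [eq1, hsub, mul_sub (((p+a)⁻¹*p*(p+a) + star a)⁻¹) ((p+a)⁻¹*p*(p+a) + star a) (2*(a.re:ℍ)),
      inv_mul_cancel₀ hps, hc]
  exact ⟨hQ, hpa, hps, eq1, eq2⟩
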